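/- For the Fibonacci recursion γ_1^h = γ_2^{h-1}/(1+γ_2^{h-1}), γ_2^h = γ_1^{h-1}/(1+γ_1^{h-1}) + γ_2^{h-1}/(1+γ_2^{h-1}) with initial values γ_1^1 = 1, γ_2^1 = 2, the limits exist and equal lim_{h→∞} γ_1^h = √2 − 1 and lim_{h→∞} γ_2^h = √2/2. -/

import Mathlib

open Filter

private lemma fdiff {x y m : ℝ} (hm : 0 ≤ m) (hx : m ≤ x) (hy : m ≤ y) :
    |x / (1 + x) - y / (1 + y)| ≤ |x - y| / (1 + m) ^ 2 := by
  have h1x : (0:ℝ) < 1 + x := by linarith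
  have h1y : (0:ℝ) < 1 + y := by linarith
  have h : x / (1 + x) - y / (1 + y) = (x - y) / ((1 + x) * (1 + y)) := by
    field_simp; ring
  rw [h, abs_div, abs_of_pos (mul_pos h1x h1y)]
  exact div_le_div_of_nonneg_left (abs_nonneg _) (by positivity) (by nlinarith)

/-- For the Fibonacci tree recursion
`γ_1^h = γ_2^{h-1}/(1+γ_2^{h-1})`,
`γ_2^h = γ_1^{h-1}/(1+γ_1^{h-1}) + γ_2^{h-1}/(1+γ_2^{h-1})`
with initial values `γ_1^1 = 1`, `γ_2^1 = 2`, the limits exist and equal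
`√2 − 1` and `√2/2` respectively. -/
theorem fibonacci_gamma_limits (γ1 γ2 : ℕ → ℝ)
    (h11 : γ1 1 = 1) (h21 : γ2 1 = 2)
    (hr1 : ∀ h, 2 ≤ h → γ1 h = γ2 (h - 1) / (1 + γ2 (h - 1)))
    (hr2 : ∀ h, 2 ≤ h →
      γ2 h = γ1 (h - 1) / (1 + γ1 (h - 1)) + γ2 (h - 1) / (1 + γ2 (h - 1))) :
    Filter.Tendsto γ1 Filter.atTop (nhds (Real.sqrt 2 - 1)) ∧
    Filter.Tendsto γ2 Filter.atTop (nhds (Real.sqrt 2 / 2)) := by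
  set s := Real.sqrt 2 with hs
  have hs2 : s ^ 2 = 2 := Real.sq_sqrt (by norm_num)
  have hsnn : 0 ≤ s := Real.sqrt_nonneg 2
  have hs1 : 1 < s := by nlinarith
  have hs3 : s < 3 / 2 := by nlinarith
  have hs43 : 4 / 3 < s := by nlinarith
  set a := s - 1 with ha
  set b := s / 2 with hb
  have hage : (1:ℝ)/3 ≤ a := by rw [ha]; linarith
  have hbge : (1:ℝ)/2 ≤ b := by rw [hb]; linarith
  have hfb : b / (1 + b) = a := by
    rw [ha, hb]; field_simp; nlinarith
  have hfa : a / (1 + a) = b - a := by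
    have hspos : (0:ℝ) < s := by linarith
    rw [ha, hb, div_eq_iff (by linarith : (0:ℝ) < 1 + (s - 1)).ne']; nlinarith
  -- uniform lower bounds
  have bnd : ∀ n : ℕ, 1/3 ≤ γ1 (n+1) ∧ 1/2 ≤ γ2 (n+1) := by
    intro n
    induction n with
    | zero => constructor <;> [rw [h11]; rw [h21]] <;> norm_num
    | succ k ih =>
      obtain ⟨i1, i2⟩ := ih
      have e1 : γ1 (k+2) = γ2 (k+1) / (1 + γ2 (k+1)) := by
        have := hr1 (k+2) (by omega); simpa using this
      have e2 : γ2 (k+2) = γ1 (k+1) / (1 + γ1 (k+1)) + γ2 (k+1) / (1 + γ2 (k+1)) := by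
        have := hr2 (k+2) (by omega); simpa using this
      have p1 : (0:ℝ) < 1 + γ1 (k+1) := by linarith
      have p2 : (0:ℝ) < 1 + γ2 (k+1) := by linarith
      constructor
      · rw [e1, le_div_iff₀ p2]; linarith
      · rw [e2]
        have b1 : (1:ℝ)/4 ≤ γ1 (k+1) / (1 + γ1 (k+1)) := by
          rw [le_div_iff₀ p1]; linarith
        have b2 : (1:ℝ)/3 ≤ γ2 (k+1) / (1 + γ2 (k+1)) := by
          rw [le_div_iff₀ p2]; linarith
        linarith
  -- one-step contraction
  have key : ∀ n : ℕ, |γ1 (n+2) - a| + |γ2 (n+2) - b| ≤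
      (8/9) * (|γ1 (n+1) - a| + |γ2 (n+1) - b|) := by
    intro n
    obtain ⟨i1, i2⟩ := bnd n
    have e1 : γ1 (n+2) = γ2 (n+1) / (1 + γ2 (n+1)) := by
      have := hr1 (n+2) (by omega); simpa using this
    have e2 : γ2 (n+2) = γ1 (n+1) / (1 + γ1 (n+1)) + γ2 (n+1) / (1 + γ2 (n+1)) := by
      have := hr2 (n+2) (by omega); simpa using this
    have d1 : |γ1 (n+2) - a| ≤ |γ2 (n+1) - b| / (1 + 1/2) ^ 2 := by
      rw [e1, ← hfb]
      exact fdiff (by norm_num) i2 hbge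
    have d2 : |γ2 (n+2) - b| ≤
        |γ1 (n+1) - a| / (1 + 1/3) ^ 2 + |γ2 (n+1) - b| / (1 + 1/2) ^ 2 := by
      rw [e2]
      have tri : |(γ1 (n+1) / (1 + γ1 (n+1)) - a / (1 + a)) +
          (γ2 (n+1) / (1 + γ2 (n+1)) - b / (1 + b))| ≤
          |γ1 (n+1) / (1 + γ1 (n+1)) - a / (1 + a)| +
          |γ2 (n+1) / (1 + γ2 (n+1)) - b / (1 + b)| := abs_add_le _ _
      calc |γ1 (n+1) / (1 + γ1 (n+1)) + γ2 (n+1) / (1 + γ2 (n+1)) - b|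
          = |(γ1 (n+1) / (1 + γ1 (n+1)) - a / (1 + a)) +
            (γ2 (n+1) / (1 + γ2 (n+1)) - b / (1 + b))| := by
            rw [hfa, hfb]; ring_nf
        _ ≤ _ := tri
        _ ≤ _ := add_le_add (fdiff (by norm_num) i1 hage) (fdiff (by norm_num) i2 hbge)
    have a1 : (0:ℝ) ≤ |γ1 (n+1) - a| := abs_nonneg _
    have a2 : (0:ℝ) ≤ |γ2 (n+1) - b| := abs_nonneg _
    have c1 : |γ2 (n+1) - b| / (1 + 1/2) ^ 2 = (4/9) * |γ2 (n+1) - b| := by ring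
    have c2 : |γ1 (n+1) - a| / (1 + 1/3) ^ 2 = (9/16) * |γ1 (n+1) - a| := by ring
    rw [c1] at d1
    rw [c1, c2] at d2
    linarith
  -- geometric decay
  have decay : ∀ n : ℕ, |γ1 (n+1) - a| + |γ2 (n+1) - b| ≤ (8/9 : ℝ) ^ n * 4 := by
    intro n
    induction n with
    | zero =>
      rw [h11, h21]
      have e1 : |1 - a| ≤ 1 := abs_le.mpr ⟨by rw [ha]; linarith, by rw [ha]; linarith⟩
      have e2 : |2 - b| ≤ 2 := abs_le.mpr ⟨by rw [hb]; linarith, by rw [hb]; linarith⟩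
      norm_num; linarith
    | succ k ih =>
      calc |γ1 (k+1+1) - a| + |γ2 (k+1+1) - b|
          ≤ (8/9) * (|γ1 (k+1) - a| + |γ2 (k+1) - b|) := key k
        _ ≤ (8/9) * ((8/9 : ℝ) ^ k * 4) := by
            have h89 : (0:ℝ) ≤ 8/9 := by norm_num
            exact mul_le_mul_of_nonneg_left ih h89
        _ = (8/9 : ℝ) ^ (k+1) * 4 := by ring
  -- conclusion
  have hg : Tendsto (fun n : ℕ => (9/2 : ℝ) * (8/9 : ℝ) ^ n) atTop (nhds 0) := by
    have := tendsto_pow_atTop_nhds_zero_of_lt_one (by norm_num : (0:ℝ) ≤ 8/9)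
      (by norm_num : (8/9:ℝ) < 1)
    simpa using this.const_mul (9/2 : ℝ)
  have habs : ∀ f : ℕ → ℝ, ∀ c : ℝ,
      (∀ n, |f (n+1) - c| ≤ (8/9 : ℝ) ^ n * 4) → Tendsto f atTop (nhds c) := by
    intro f c hf
    rw [tendsto_iff_dist_tendsto_zero]
    apply squeeze_zero' (Eventually.of_forall fun n => dist_nonneg) _ hg
    filter_upwards [eventually_ge_atTop 1] with n hn
    obtain ⟨m, rfl⟩ : ∃ m, n = m + 1 := ⟨n - 1, by omega⟩
    rw [Real.dist_eq]
    calc |f (m+1) - c| ≤ (8/9 : ℝ) ^ m * 4 := hf m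
      _ = (9/2 : ℝ) * (8/9 : ℝ) ^ (m+1) := by ring
  constructor
  · exact habs γ1 a fun n => by
      have := decay n
      have := abs_nonneg (γ2 (n+1) - b)
      linarith
  · exact habs γ2 b fun n => by
      have := decay n
      have := abs_nonneg (γ1 (n+1) - a)
      linarith
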